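/- Let K be a field, m ≥ 1, n ≥ 0, d ≥ 2 integers, p = M_{m,d-1} the number of monomials of degree d-1 in X_1,...,X_m, and R = K[X_1,...,X_m, Y_{1,1},...,Y_{p,n}]. Let Z_1,...,Z_p enumerate the degree-(d-1) monomials in X_1,...,X_m, and let I = ({X_i^d : 1 ≤ i ≤ m} ∪ {∑_{j=1}^p Z_j Y_{j,k} : 1 ≤ k ≤ n}). Set T = ∏_{i=1}^m X_i^{d-1}. Then T ∉ I. -/

import Mathlib

open MvPolynomial in
lemma aux_not_mem {K : Type*} [Field K] (m d : ℕ) (hd : 2 ≤ d) :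
    (∏ i : Fin m, (X i : MvPolynomial (Fin m) K) ^ (d - 1)) ∉
      Ideal.span (Set.range fun i : Fin m => (X i : MvPolynomial (Fin m) K) ^ d) := by
  intro h
  rw [show (Ideal.span (Set.range fun i : Fin m => (X i : MvPolynomial (Fin m) K) ^ d)) =
      Submodule.span (MvPolynomial (Fin m) K)
        (Set.range fun i : Fin m => (X i : MvPolynomial (Fin m) K) ^ d) from rfl,
    Submodule.mem_span_range_iff_exists_fun] at h
  obtain ⟨c, hc⟩ := h
  set e : Fin m →₀ ℕ := Finsupp.equivFunOnFinite.symm (fun _ => d - 1) with he_def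
  have he : ∀ i, e i = d - 1 := fun i => rfl
  have hsupp : e.support = Finset.univ := by
    ext i; simp [Finsupp.mem_support_iff, he i]; omega
  have hT : (∏ i : Fin m, (X i : MvPolynomial (Fin m) K) ^ (d - 1)) = monomial e 1 := by
    rw [← prod_X_pow_eq_monomial, hsupp]
    exact Finset.prod_congr rfl fun i _ => by rw [he]
  have h0 := congrArg (coeff e) hc
  rw [hT, coeff_monomial, if_pos rfl] at h0
  have : ∀ i : Fin m, coeff e (c i • (X i : MvPolynomial (Fin m) K) ^ d) = 0 := by
    intro i
    rw [smul_eq_mul, X_pow_eq_monomial, coeff_mul_monomial']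
    rw [if_neg]
    intro hle
    have := hle i
    simp [Finsupp.single_apply, he i] at this
    omega
  rw [coeff_sum] at h0
  simp only [this, Finset.sum_const_zero] at h0
  exact zero_ne_one h0


open MvPolynomial in
/-- Paper's construction: `R = K[X₁,…,X_m, Y_{1,1},…,Y_{p,n}]` with
`p = M_{m,d-1} = C(m+d-2, d-1)`, `Z₁,…,Z_p` enumerating the degree-`(d-1)`
monomials in the `X` variables, and `I = I_{m,n,d}` generated by the `X_i^d`
together with `∑_j Z_j Y_{j,k}`.  Then `T = ∏ X_i^(d-1)` is not in `I`. -/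
theorem T_not_mem_I (K : Type*) [Field K] (m n d p : ℕ)
    (hm : 1 ≤ m) (hd : 2 ≤ d) (hp : p = Nat.choose (m + d - 2) (d - 1))
    (Z : Fin p → (Fin m →₀ ℕ)) (hZinj : Function.Injective Z)
    (hZdeg : ∀ j, ((Z j).sum fun _ k => k) = d - 1)
    (hZsurj : ∀ e : Fin m →₀ ℕ, (e.sum fun _ k => k) = d - 1 → ∃ j, Z j = e) :
    let R := MvPolynomial (Fin m ⊕ Fin p × Fin n) K
    let Zpoly : Fin p → R := fun j => monomial (Finsupp.mapDomain Sum.inl (Z j)) 1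
    let I : Ideal R := Ideal.span
      ((Set.range fun i : Fin m => (X (Sum.inl i) : R) ^ d) ∪
       (Set.range fun k : Fin n => ∑ j : Fin p, Zpoly j * X (Sum.inr (j, k))))
    (∏ i : Fin m, (X (Sum.inl i) : R) ^ (d - 1)) ∉ I := by
  intro R Zpoly I hT
  set φ : R →ₐ[K] MvPolynomial (Fin m) K :=
    aeval (Sum.elim X (fun _ => 0)) with hφ
  have hmem : φ (∏ i : Fin m, (X (Sum.inl i) : R) ^ (d - 1)) ∈ Ideal.map φ I :=
    Ideal.mem_map_of_mem _ hT
  have h1 : φ (∏ i : Fin m, (X (Sum.inl i) : R) ^ (d - 1)) =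
      ∏ i : Fin m, (X i : MvPolynomial (Fin m) K) ^ (d - 1) := by
    rw [hφ, map_prod]
    exact Finset.prod_congr rfl fun i _ => by rw [map_pow, aeval_X, Sum.elim_inl]
  have h2 : Ideal.map φ I ≤
      Ideal.span (Set.range fun i : Fin m => (X i : MvPolynomial (Fin m) K) ^ d) := by
    rw [show I = Ideal.span _ from rfl, Ideal.map_span, Ideal.span_le]
    rintro x ⟨y, hy, rfl⟩
    rcases hy with ⟨i, rfl⟩ | ⟨k, rfl⟩
    · have : φ ((X (Sum.inl i) : R) ^ d) = (X i : MvPolynomial (Fin m) K) ^ d := by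
        rw [hφ, map_pow, aeval_X, Sum.elim_inl]
      rw [this]
      exact Ideal.subset_span ⟨i, rfl⟩
    · have : φ (∑ j : Fin p, Zpoly j * X (Sum.inr (j, k))) = 0 := by
        rw [hφ, map_sum]
        refine Finset.sum_eq_zero fun j _ => ?_
        rw [map_mul, aeval_X, Sum.elim_inr, mul_zero]
      rw [this]
      exact Ideal.zero_mem _
  rw [h1] at hmem
  exact aux_not_mem m d hd (h2 hmem)
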